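/- Gradient formula for the hidden state: let C = (I - U T⁻¹ Uᵀ) h and let L be a differentiable scalar function of C. Setting C̃ = (Tᵀ)⁻¹ Uᵀ (∂L/∂C), the gradient of L with respect to h equals ∂L/∂h = ∂L/∂C - U C̃. -/

import Mathlib

open Matrix RealInnerProductSpace

noncomputable def wyT {m : ℕ} (A : Matrix (Fin m) (Fin m) ℝ) : Matrix (Fin m) (Fin m) ℝ :=
  Matrix.of fun i j => if (i : ℕ) < (j : ℕ) then A i j else if i = j then A i i / 2 else 0

/-- gradient w.r.t. the hidden state.  With `C = (I - U T⁻¹ Uᵀ) h`,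
`C̃ = (Tᵀ)⁻¹ Uᵀ (∂L/∂C)`, we have `∂L/∂h = ∂L/∂C - U C̃`. -/
theorem gradient_hidden_state {n m : ℕ} (hm : m ≤ n - 1)
    (U : Matrix (Fin n) (Fin m) ℝ)
    (hstruct : ∀ j : Fin m, (fun i => U i j) ≠ 0 ∧
      ∀ i : Fin n, (i : ℕ) < (j : ℕ) → U i j = 0)
    (hT : IsUnit (wyT (U.transpose * U)))
    (L : EuclideanSpace ℝ (Fin n) → ℝ) (hL : Differentiable ℝ L)
    (h : EuclideanSpace ℝ (Fin n)) :
    let W := (1 : Matrix (Fin n) (Fin n) ℝ) - U * (wyT (U.transpose * U))⁻¹ * U.transpose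
    let C : EuclideanSpace ℝ (Fin n) := WithLp.toLp 2 (W.mulVec h)
    let g := gradient L C
    let Ctilde := ((wyT (U.transpose * U)).transpose)⁻¹.mulVec (U.transpose.mulVec g)
    let UC : EuclideanSpace ℝ (Fin n) := WithLp.toLp 2 (U.mulVec Ctilde)
    gradient (fun x : EuclideanSpace ℝ (Fin n) =>
        L ((WithLp.toLp 2 (W.mulVec x) : EuclideanSpace ℝ (Fin n)))) h = g - UC := by
  intro W C g Ctilde UC
  let A : EuclideanSpace ℝ (Fin n) →L[ℝ] EuclideanSpace ℝ (Fin n) :=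
    LinearMap.toContinuousLinearMap (Matrix.toEuclideanLin W)
  have hA : ∀ x : EuclideanSpace ℝ (Fin n), A x = WithLp.toLp 2 (W.mulVec x) := fun _ => rfl
  have hfd : HasFDerivAt (fun x : EuclideanSpace ℝ (Fin n) =>
      L ((WithLp.toLp 2 (W.mulVec x) : EuclideanSpace ℝ (Fin n)))) ((fderiv ℝ L C).comp A) h := by
    have h1 : HasFDerivAt (fun x => A x) A h := A.hasFDerivAt
    have h2 : HasFDerivAt L (fderiv ℝ L C) (A h) := by
      have := (hL (A h)).hasFDerivAt
      simpa [hA] using this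
    exact h2.comp h h1
  have hgrad : gradient (fun x : EuclideanSpace ℝ (Fin n) =>
      L ((WithLp.toLp 2 (W.mulVec x) : EuclideanSpace ℝ (Fin n)))) h =
      (InnerProductSpace.toDual ℝ (EuclideanSpace ℝ (Fin n))).symm ((fderiv ℝ L C).comp A) := by
    rw [gradient, hfd.fderiv]
  have hginner : ∀ w : EuclideanSpace ℝ (Fin n), (fderiv ℝ L C) w = ⟪g, w⟫ := by
    intro w
    have hgdef : g = (InnerProductSpace.toDual ℝ (EuclideanSpace ℝ (Fin n))).symm
        (fderiv ℝ L C) := rfl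
    rw [hgdef, InnerProductSpace.toDual_symm_apply]
  have hinner : ∀ x y : EuclideanSpace ℝ (Fin n), ⟪x, y⟫ = x ⬝ᵥ y := by
    intro x y
    simp [PiLp.inner_apply, dotProduct, mul_comm]
  have hWT : W.transpose.mulVec g = g - UC := by
    show ((1 : Matrix (Fin n) (Fin n) ℝ)
        - U * (wyT (U.transpose * U))⁻¹ * U.transpose).transpose.mulVec g = g - UC
    have heq : ((1 : Matrix (Fin n) (Fin n) ℝ)
          - U * (wyT (U.transpose * U))⁻¹ * U.transpose).transpose
        = 1 - U * ((wyT (U.transpose * U)).transpose)⁻¹ * U.transpose := by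
      simp [Matrix.transpose_sub, Matrix.transpose_mul, Matrix.transpose_nonsing_inv,
        Matrix.mul_assoc]
    rw [heq, Matrix.sub_mulVec, Matrix.one_mulVec]
    congr 1
    show (U * ((wyT (U.transpose * U)).transpose)⁻¹ * U.transpose).mulVec g = U.mulVec Ctilde
    rw [Matrix.mul_assoc, ← Matrix.mulVec_mulVec, ← Matrix.mulVec_mulVec]
  have hkey : (fderiv ℝ L C).comp A =
      (InnerProductSpace.toDual ℝ (EuclideanSpace ℝ (Fin n))) (g - UC) := by
    ext v
    calc (fderiv ℝ L C).comp A v = ⟪g, (WithLp.toLp 2 (W.mulVec v) : EuclideanSpace ℝ (Fin n))⟫ := by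
          rw [ContinuousLinearMap.comp_apply, hA, hginner]
      _ = (W.transpose.mulVec g) ⬝ᵥ v := by
          rw [hinner, WithLp.ofLp_toLp, Matrix.dotProduct_mulVec, ← Matrix.mulVec_transpose]
      _ = ⟪g - UC, v⟫ := by rw [hWT, hinner, WithLp.ofLp_sub]
      _ = (InnerProductSpace.toDual ℝ (EuclideanSpace ℝ (Fin n))) (g - UC) v := by
          rw [InnerProductSpace.toDual_apply_apply]
  rw [hgrad, hkey, LinearIsometryEquiv.symm_apply_apply]
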